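/- If ℓ_{n,m} ≥ 2(n+m) − 20 for integers 2 ≤ n ≤ m, then γ(G_{n,m}) ≥ ⌈(nm + 2(n+m) − 20)/5⌉ ≥ ⌊(n+2)(m+2)/5⌋ − 4. -/

import Mathlib

/-- The `n × m` grid graph: vertices `[n] × [m]`, with `(i,j)` adjacent to `(k,l)`
iff `|i-k| + |j-l| = 1`. -/
def gridGraph (n m : ℕ) : SimpleGraph (Fin n × Fin m) where
  Adj u v := Nat.dist u.1.val v.1.val + Nat.dist u.2.val v.2.val = 1
  symm := ⟨by intro u v h; simpa [Nat.dist_comm] using h⟩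
  loopless := ⟨by intro u h; simp [Nat.dist_self] at h⟩

instance (n m : ℕ) : DecidableRel (gridGraph n m).Adj :=
  fun _ _ => instDecidableEqNat _ _

/-- Closed neighborhood `N[S]` of a set of vertices. -/
def closedNbhd (n m : ℕ) (S : Finset (Fin n × Fin m)) : Finset (Fin n × Fin m) :=
  S.biUnion fun v => insert v ((gridGraph n m).neighborFinset v)

/-- The loss `ℓ(S) = 5|S| - |N[S]|`. -/
def loss (n m : ℕ) (S : Finset (Fin n × Fin m)) : ℤ :=
  5 * S.card - (closedNbhd n m S).card

/-- `D` is a dominating set: every vertex lies in `N[D]`. -/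
def IsDominating (n m : ℕ) (D : Finset (Fin n × Fin m)) : Prop :=
  closedNbhd n m D = Finset.univ

/-- The domination number `γ(G_{n,m})`. -/
noncomputable def domNumber (n m : ℕ) : ℕ :=
  sInf {k | ∃ D : Finset (Fin n × Fin m), IsDominating n m D ∧ D.card = k}

/-- The minimum loss `ℓ_{n,m}` over dominating sets of `G_{n,m}`. -/
noncomputable def minLoss (n m : ℕ) : ℤ :=
  sInf {l | ∃ D : Finset (Fin n × Fin m), IsDominating n m D ∧ loss n m D = l}

lemma univ_dominating (n m : ℕ) : IsDominating n m Finset.univ := by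
  ext v
  simp only [closedNbhd, Finset.mem_biUnion, Finset.mem_univ, iff_true]
  exact ⟨v, trivial, Finset.mem_insert_self _ _⟩

theorem stmt_17 (n m : ℕ) (hn : 2 ≤ n) (hnm : n ≤ m)
    (h : 2 * ((n : ℤ) + m) - 20 ≤ minLoss n m) :
    ⌈(((n * m : ℤ) + 2 * ((n : ℤ) + m) - 20 : ℤ) : ℚ) / 5⌉ ≤ (domNumber n m : ℤ) ∧
    ((n : ℤ) + 2) * ((m : ℤ) + 2) / 5 - 4 ≤
      ⌈(((n * m : ℤ) + 2 * ((n : ℤ) + m) - 20 : ℤ) : ℚ) / 5⌉ := by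
  set a : ℤ := (n * m : ℤ) + 2 * ((n : ℤ) + m) - 20 with ha
  -- domNumber is attained
  have hne : {k | ∃ D : Finset (Fin n × Fin m), IsDominating n m D ∧ D.card = k}.Nonempty :=
    ⟨(Finset.univ : Finset (Fin n × Fin m)).card, Finset.univ, univ_dominating n m, rfl⟩
  obtain ⟨D, hD, hcard⟩ := Nat.sInf_mem hne
  have hNcard : ((closedNbhd n m D).card : ℤ) = (n : ℤ) * m := by
    rw [hD]
    simp [Finset.card_univ]
  -- minLoss ≤ loss D
  have hbdd : BddBelow {l : ℤ | ∃ D : Finset (Fin n × Fin m), IsDominating n m D ∧ loss n m D = l} := by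
    refine ⟨-((n : ℤ) * m), ?_⟩
    rintro l ⟨E, hE, rfl⟩
    have h1 : ((closedNbhd n m E).card : ℤ) = (n : ℤ) * m := by
      rw [hE]; simp [Finset.card_univ]
    have h2 : (0 : ℤ) ≤ 5 * E.card := by positivity
    simp only [loss]
    omega
  have hle : minLoss n m ≤ loss n m D :=
    csInf_le hbdd ⟨D, hD, rfl⟩
  have hloss : loss n m D = 5 * (domNumber n m : ℤ) - (n : ℤ) * m := by
    simp only [loss, hNcard, hcard, domNumber]
  have key : a ≤ 5 * (domNumber n m : ℤ) := by
    have := h.trans hle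
    rw [hloss] at this
    omega
  have hceil : ⌈((a : ℤ) : ℚ) / 5⌉ ≤ (domNumber n m : ℤ) := by
    rw [Int.ceil_le]
    rw [div_le_iff₀ (by norm_num : (0:ℚ) < 5)]
    have : a ≤ (domNumber n m : ℤ) * 5 := by omega
    exact_mod_cast this
  refine ⟨hceil, ?_⟩
  have hge : ((a : ℤ) : ℚ) / 5 ≤ (⌈((a : ℤ) : ℚ) / 5⌉ : ℚ) := Int.le_ceil _
  have hge' : a ≤ 5 * ⌈((a : ℤ) : ℚ) / 5⌉ := by
    rw [div_le_iff₀ (by norm_num : (0:ℚ) < 5)] at hge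
    have : a ≤ ⌈((a : ℤ) : ℚ) / 5⌉ * 5 := by exact_mod_cast hge
    omega
  have hprod : ((n : ℤ) + 2) * ((m : ℤ) + 2) = a + 24 := by rw [ha]; ring
  rw [hprod]
  omega
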